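/- An AME(6,5) state of minimal support exists, and for every integer n ≥ 7 no AME(n,5) state of minimal support exists; that is, N(5) = 6, where N(5) is the largest n for which an AME(n,5) state of minimal support exists. -/

import Mathlib

open scoped BigOperators Classical

noncomputable section

namespace AMEPaper

/-- Combine a configuration on the complement of `B` with a configuration on `B`
into a full configuration on `Fin n`. -/
def combine {n d : ℕ} (B : Finset (Fin n)) (a : {i : Fin n // i ∉ B} → Fin d)
    (b : {i : Fin n // i ∈ B} → Fin d) : Fin n → Fin d :=
  fun i => if h : i ∈ B then b ⟨i, h⟩ else a ⟨i, h⟩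

/-- `ψ` is an absolutely maximally entangled state with `n` sites and local dimension `d`:
it is a unit vector and, for every set `B` of at most `n/2` sites, the reduced density
matrix on `B` equals `d ^ (-|B|)` times the identity. -/
def IsAME (n d : ℕ) (ψ : (Fin n → Fin d) → ℂ) : Prop :=
  (∑ s : Fin n → Fin d, ‖ψ s‖ ^ 2 = 1) ∧
  ∀ B : Finset (Fin n), B.card ≤ n / 2 →
    ∀ b b' : {i : Fin n // i ∈ B} → Fin d,
      (∑ a : {i : Fin n // i ∉ B} → Fin d,
          ψ (combine B a b) * (starRingEnd ℂ) (ψ (combine B a b'))) =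
        if b = b' then ((d : ℂ) ^ B.card)⁻¹ else 0

/-- `ψ` has minimal support: its support in the computational basis has exactly
`d ^ ⌊n/2⌋` elements. -/
def HasMinimalSupport (n d : ℕ) (ψ : (Fin n → Fin d) → ℂ) : Prop :=
  {s : Fin n → Fin d | ψ s ≠ 0}.ncard = d ^ (n / 2)

/-- `C` is an MDS code over the alphabet `Fin d` with wordlength `n` and minimum
Hamming distance `δ`: its minimum distance is exactly `δ` and it meets the Singleton
bound, `|C| = d ^ (n - δ + 1)`. -/
def IsMDSCode (d n δ : ℕ) (C : Finset (Fin n → Fin d)) : Prop :=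
  C.card = d ^ (n - δ + 1) ∧
  (∀ w ∈ C, ∀ w' ∈ C, w ≠ w' → δ ≤ hammingDist w w') ∧
  (∃ w ∈ C, ∃ w' ∈ C, w ≠ w' ∧ hammingDist w w' = δ)

/-- A latin `k`-hypercube of order `d`: fixing all indices but any one of them, the
resulting map `Fin d → Fin d` is a bijection. -/
def IsLatinHypercube (k d : ℕ) (L : (Fin k → Fin d) → Fin d) : Prop :=
  ∀ (i : Fin k) (x : Fin k → Fin d),
    Function.Bijective fun v : Fin d => L (Function.update x i v)

/-- Two latin `k`-hypercubes are orthogonal if for every pair of distinct indices and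
all ways of fixing the remaining indices, the two resulting latin squares are
orthogonal. -/
def AreOrthogonalHypercubes (k d : ℕ) (L M : (Fin k → Fin d) → Fin d) : Prop :=
  ∀ (i j : Fin k), i ≠ j → ∀ x : Fin k → Fin d,
    Function.Injective fun p : Fin d × Fin d =>
      (L (Function.update (Function.update x i p.1) j p.2),
       M (Function.update (Function.update x i p.1) j p.2))

/-- A latin square of order `d`: every row and every column is a bijection. -/
def IsLatinSquare (d : ℕ) (L : Fin d × Fin d → Fin d) : Prop :=
  (∀ i : Fin d, Function.Bijective fun j => L (i, j)) ∧
  (∀ j : Fin d, Function.Bijective fun i => L (i, j))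

/-! ### Part 1 : the code -/

def enc' (x y z : Fin 5) : Fin 6 → Fin 5 :=
  ![x, x+y+z, x+2*y+4*z, x+3*y+4*z, x+4*y+z, z]

def enc (p : Fin 3 → Fin 5) : Fin 6 → Fin 5 := enc' (p 0) (p 1) (p 2)

set_option maxRecDepth 100000 in
set_option maxHeartbeats 4000000 in
lemma enc'_dist : ∀ x y z x' y' z' : Fin 5, (x = x' ∧ y = y' ∧ z = z') ∨
    (Finset.univ.filter fun i => enc' x y z i = enc' x' y' z' i).card ≤ 2 := by
  decide

lemma enc_agree3 {p q : Fin 3 → Fin 5} {S : Finset (Fin 6)} (hS : 3 ≤ S.card)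
    (h : ∀ i ∈ S, enc p i = enc q i) : p = q := by
  rcases enc'_dist (p 0) (p 1) (p 2) (q 0) (q 1) (q 2) with ⟨h0, h1, h2⟩ | hle
  · funext i
    match i with
    | 0 => exact h0
    | 1 => exact h1
    | 2 => exact h2
  · exfalso
    have hsub : S ⊆ Finset.univ.filter fun i => enc' (p 0) (p 1) (p 2) i
        = enc' (q 0) (q 1) (q 2) i := by
      intro i hi
      simp only [Finset.mem_filter, Finset.mem_univ, true_and]
      exact h i hi
    have := Finset.card_le_card hsub
    omega

lemma enc_inj : Function.Injective enc := by
  intro p q h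
  refine enc_agree3 (S := Finset.univ) ?_ (fun i _ => by rw [h])
  simp

def Cs : Finset (Fin 6 → Fin 5) := Finset.univ.image enc

lemma card_Cs : Cs.card = 125 := by
  rw [Cs, Finset.card_image_of_injective _ enc_inj]
  simp [Fintype.card_fun]

/-- generic counting lemma -/
lemma count_matching {ι γ : Type*} [Fintype ι] [DecidableEq ι] [Fintype γ] [DecidableEq γ]
    (g : γ → ι → Fin 5) (S : Finset ι)
    (hinj : ∀ p q : γ, (∀ i ∈ S, g p i = g q i) → p = q)
    (hcard : Fintype.card γ = 5 ^ S.card)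
    {B : Finset ι} (hBS : B ⊆ S) (f : ι → Fin 5) :
    (Finset.univ.filter (fun p : γ => ∀ i ∈ B, g p i = f i)).card
      = 5 ^ (S.card - B.card) := by
  classical
  set π : γ → ({i : ι // i ∈ S} → Fin 5) := fun p i => g p i.1 with hπ
  have hπinj : Function.Injective π := by
    intro p q h
    exact hinj p q (fun i hi => congrFun h ⟨i, hi⟩)
  have hbij : Function.Bijective π := by
    rw [Fintype.bijective_iff_injective_and_card]
    refine ⟨hπinj, ?_⟩
    rw [Fintype.card_fun, Fintype.card_coe, hcard, Fintype.card_fin]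
  set T : Finset ({i : ι // i ∈ S} → Fin 5) :=
    Fintype.piFinset (fun i => if (i : ι) ∈ B then {f i} else Finset.univ) with hT
  have key : ∀ p : γ, ((∀ i ∈ B, g p i = f i) ↔ π p ∈ T) := by
    intro p
    rw [hT, Fintype.mem_piFinset]
    constructor
    · intro h i
      by_cases hi : (i : ι) ∈ B
      · simp [hi, hπ, h i hi]
      · simp [hi]
    · intro h i hi
      have := h ⟨i, hBS hi⟩
      simpa [hi, hπ] using this
  have hcards : (Finset.univ.filter (fun p : γ => ∀ i ∈ B, g p i = f i)).card = T.card := by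
    apply Finset.card_bij (fun p _ => π p)
    · intro p hp
      simp only [Finset.mem_filter, Finset.mem_univ, true_and] at hp
      exact (key p).1 hp
    · intro p _ q _ h
      exact hπinj h
    · intro v hv
      obtain ⟨p, rfl⟩ := hbij.2 v
      exact ⟨p, Finset.mem_filter.2 ⟨Finset.mem_univ _, (key p).2 hv⟩, rfl⟩
  rw [hcards, Fintype.card_piFinset]
  have : ∀ i : {i : ι // i ∈ S},
      ((if (i : ι) ∈ B then ({f i} : Finset (Fin 5)) else Finset.univ)).card
        = if (i : ι) ∈ B then 1 else 5 := by
    intro i; split <;> simp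
  rw [Finset.prod_congr rfl (fun i _ => this i)]
  rw [Finset.prod_ite (fun _ => 1) (fun _ => 5), Finset.prod_const_one, one_mul,
    Finset.prod_const]
  congr 1
  have h1 : (Finset.univ.filter fun i : {i : ι // i ∈ S} => (i : ι) ∈ B).card = B.card := by
    refine Finset.card_bij (fun i _ => (i : ι)) ?_ ?_ ?_
    · intro i hi; simpa using hi
    · intro i _ j _ h; exact Subtype.ext h
    · intro j hj
      exact ⟨⟨j, hBS hj⟩, by simpa using hj, rfl⟩
  have h2 := Finset.card_filter_add_card_filter_not
    (s := (Finset.univ : Finset {i : ι // i ∈ S})) (fun i => (i : ι) ∈ B)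
  have h3 : (Finset.univ : Finset {i : ι // i ∈ S}).card = S.card := by
    simp [Fintype.card_coe]
  omega


/-! ### the state -/

def rr : ℝ := (Real.sqrt 5)⁻¹ ^ 3

def cc : ℂ := (rr : ℂ)

def ψ₀ : (Fin 6 → Fin 5) → ℂ := fun s => if s ∈ Cs then cc else 0

lemma rr_pos : 0 < rr := by
  have h5 : (0:ℝ) < Real.sqrt 5 := Real.sqrt_pos.2 (by norm_num)
  exact pow_pos (inv_pos.2 h5) 3

lemma rr_sq : rr ^ 2 = (125 : ℝ)⁻¹ := by
  have h : Real.sqrt 5 ^ 2 = 5 := Real.sq_sqrt (by norm_num)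
  have : rr ^ 2 = ((Real.sqrt 5 ^ 2)⁻¹) ^ 3 := by rw [rr]; ring
  rw [this, h]; norm_num

lemma cc_ne : cc ≠ 0 := by
  simp [cc, Complex.ofReal_ne_zero]
  exact ne_of_gt rr_pos

lemma cc_mul_conj : cc * (starRingEnd ℂ) cc = (125 : ℂ)⁻¹ := by
  rw [cc, Complex.conj_ofReal, ← Complex.ofReal_mul, ← sq, rr_sq]
  push_cast
  ring

lemma abs_cc_sq : ‖cc‖ ^ 2 = (125 : ℝ)⁻¹ := by
  rw [cc, Complex.norm_real, Real.norm_eq_abs, sq_abs, rr_sq]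

/-- main counting fact -/
lemma card_filter_combine (B : Finset (Fin 6)) (hB : B.card ≤ 3)
    (b : {i : Fin 6 // i ∈ B} → Fin 5) :
    (Finset.univ.filter
        (fun a : {i : Fin 6 // i ∉ B} → Fin 5 => combine B a b ∈ Cs)).card
      = 5 ^ (3 - B.card) := by
  classical
  set f : Fin 6 → Fin 5 := fun i => if h : i ∈ B then b ⟨i, h⟩ else 0 with hf
  obtain ⟨S, hBS, hScard⟩ : ∃ S, B ⊆ S ∧ S.card = 3 := by
    obtain ⟨S, h1, h2⟩ := Finset.exists_superset_card_eq (s := B) hB (by simp)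
    exact ⟨S, h1, h2⟩
  have step1 : (Finset.univ.filter (fun p : Fin 3 → Fin 5 => ∀ i ∈ B, enc p i = f i)).card
      = (Finset.univ.filter
        (fun a : {i : Fin 6 // i ∉ B} → Fin 5 => combine B a b ∈ Cs)).card := by
    refine Finset.card_bij (fun p _ => fun i : {i : Fin 6 // i ∉ B} => enc p i.1) ?_ ?_ ?_
    · intro p hp
      simp only [Finset.mem_filter, Finset.mem_univ, true_and] at hp ⊢
      have hcomb : combine B (fun i : {i : Fin 6 // i ∉ B} => enc p i.1) b = enc p := by
        funext i
        by_cases h : i ∈ B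
        · have := hp i h
          rw [hf] at this
          simp only [h, dif_pos] at this
          simp [combine, h, this]
        · simp [combine, h]
      rw [hcomb]
      exact Finset.mem_image.2 ⟨p, Finset.mem_univ _, rfl⟩
    · intro p hp q hq h
      simp only [Finset.mem_filter, Finset.mem_univ, true_and] at hp hq
      apply enc_inj
      funext i
      by_cases hi : i ∈ B
      · rw [hp i hi, hq i hi]
      · exact congrFun h ⟨i, hi⟩
    · intro a ha
      simp only [Finset.mem_filter, Finset.mem_univ, true_and] at ha
      obtain ⟨p, _, hp⟩ := Finset.mem_image.1 ha
      refine ⟨p, ?_, ?_⟩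
      · simp only [Finset.mem_filter, Finset.mem_univ, true_and]
        intro i hi
        rw [hp]
        simp [combine, hi, hf]
      · funext i
        show enc p i.1 = a i
        rw [hp]
        simp [combine, i.2]
  rw [← step1]
  have := count_matching enc S (fun p q h => enc_agree3 (by omega) h)
    (by rw [hScard, Fintype.card_fun]; simp) hBS f
  rw [hScard] at this
  convert this using 2
  congr!


lemma combine_eq_of_ne {B : Finset (Fin 6)} (hB : B.card ≤ 3)
    (a : {i : Fin 6 // i ∉ B} → Fin 5) (b b' : {i : Fin 6 // i ∈ B} → Fin 5)
    (h1 : combine B a b ∈ Cs) (h2 : combine B a b' ∈ Cs) : b = b' := by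
  obtain ⟨p, _, hp⟩ := Finset.mem_image.1 h1
  obtain ⟨q, _, hq⟩ := Finset.mem_image.1 h2
  have hcompl : 3 ≤ Bᶜ.card := by
    have := Finset.card_compl B
    simp only [Fintype.card_fin] at this
    omega
  obtain ⟨S, hS1, hS2⟩ := Finset.exists_subset_card_eq hcompl
  have hpq : p = q := by
    refine enc_agree3 (S := S) (by omega) ?_
    intro i hi
    have hiB : i ∉ B := by simpa using hS1 hi
    rw [hp, hq]
    simp [combine, hiB]
  funext i
  have hcc : combine B a b = combine B a b' := by rw [← hp, hpq, hq]
  have := congrFun hcc i.1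
  simpa [combine, i.2] using this

theorem part1 : IsAME 6 5 ψ₀ ∧ HasMinimalSupport 6 5 ψ₀ := by
  have hsupp : {s : Fin 6 → Fin 5 | ψ₀ s ≠ 0} = ↑Cs := by
    ext s
    simp only [Set.mem_setOf_eq, ψ₀, Finset.coe_mem, Finset.mem_coe]
    by_cases h : s ∈ Cs <;> simp [h, cc_ne]
  refine ⟨⟨?_, ?_⟩, ?_⟩
  · -- normalization
    have : ∀ s : Fin 6 → Fin 5, ‖ψ₀ s‖ ^ 2 = if s ∈ Cs then (125:ℝ)⁻¹ else 0 := by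
      intro s
      by_cases h : s ∈ Cs <;> simp [ψ₀, h, abs_cc_sq]
    rw [Finset.sum_congr rfl (fun s _ => this s)]
    rw [Finset.sum_ite, Finset.sum_const, Finset.sum_const_zero, add_zero]
    have : (Finset.univ.filter (fun s => s ∈ Cs)).card = 125 := by
      rw [Finset.filter_mem_eq_inter, Finset.univ_inter]
      exact card_Cs
    rw [this]
    norm_num
  · -- reduced density matrices
    intro B hB b b'
    have h3 : B.card ≤ 3 := by norm_num at hB; exact hB
    have hterm : ∀ a : {i : Fin 6 // i ∉ B} → Fin 5,
        ψ₀ (combine B a b) * (starRingEnd ℂ) (ψ₀ (combine B a b'))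
          = if (combine B a b ∈ Cs ∧ combine B a b' ∈ Cs) then (125:ℂ)⁻¹ else 0 := by
      intro a
      by_cases h1 : combine B a b ∈ Cs <;> by_cases h2 : combine B a b' ∈ Cs <;>
        simp [ψ₀, h1, h2, cc_mul_conj]
    rw [Finset.sum_congr rfl (fun a _ => hterm a)]
    rw [Finset.sum_ite, Finset.sum_const, Finset.sum_const_zero, add_zero]
    by_cases hbb : b = b'
    · subst hbb
      simp only [if_pos rfl, and_self]
      have := card_filter_combine B h3 b
      rw [this] -- fails? instance; try convert
      rw [nsmul_eq_mul]
      push_cast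
      have key : (5:ℂ) ^ (3 - B.card) * ((5:ℂ) ^ B.card) = 125 := by
        rw [← pow_add]
        have : 3 - B.card + B.card = 3 := by omega
        rw [this]
        norm_num
      have h5 : ((5:ℂ) ^ B.card) ≠ 0 := pow_ne_zero _ (by norm_num)
      field_simp
      linear_combination key
    · rw [if_neg hbb]
      have : (Finset.univ.filter (fun a : {i : Fin 6 // i ∉ B} → Fin 5 =>
          combine B a b ∈ Cs ∧ combine B a b' ∈ Cs)) = ∅ := by
        rw [Finset.filter_eq_empty_iff]
        rintro a - ⟨h1, h2⟩
        exact hbb (combine_eq_of_ne h3 a b b' h1 h2)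
      rw [this]
      simp
  · -- minimal support
    rw [HasMinimalSupport, hsupp, Set.ncard_coe_finset, card_Cs]
    norm_num


/-- An "MDS-like" code: through every partial assignment on any `m` coordinates
there is a unique codeword. -/
def Good (n m : ℕ) (C : Finset (Fin n → Fin 5)) : Prop :=
  ∀ S : Finset (Fin n), S.card = m → ∀ f : Fin n → Fin 5,
    ∃! w, w ∈ C ∧ ∀ i ∈ S, w i = f i

lemma inv5 (f : Fin 5 → Fin 5) (h : Function.Involutive f) : ∃ x, f x = x := by
  have : Fact (Nat.Prime 2) := ⟨by norm_num⟩
  apply Equiv.Perm.exists_fixed_point_of_prime (p := 2) (n := 1) (σ := h.toPerm f)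
  · simp
  · ext x; simp [pow_succ, h x]

section Core
variable {C : Finset (Fin 7 → Fin 5)} (hC : Good 7 3 C)

include hC

lemma triple_card (i j k : Fin 7) (hij : i ≠ j) (hik : i ≠ k) (hjk : j ≠ k) :
    ({i, j, k} : Finset (Fin 7)).card = 3 :=
  Finset.card_eq_three.mpr ⟨i, j, k, hij, hik, hjk, rfl⟩

lemma agree3 {w w' : Fin 7 → Fin 5} (hw : w ∈ C) (hw' : w' ∈ C) (i j k : Fin 7)
    (hij : i ≠ j) (hik : i ≠ k) (hjk : j ≠ k)
    (h1 : w i = w' i) (h2 : w j = w' j) (h3 : w k = w' k) : w = w' := by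
  have hcard := triple_card hC i j k hij hik hjk
  have h := hC {i, j, k} hcard w'
  have hmatch : ∀ t ∈ ({i, j, k} : Finset (Fin 7)), w t = w' t := by
    intro t ht
    rcases Finset.mem_insert.1 ht with rfl | ht
    · exact h1
    rcases Finset.mem_insert.1 ht with rfl | ht
    · exact h2
    rw [Finset.mem_singleton.1 ht]
    exact h3
  exact (h.unique ⟨hw, hmatch⟩ ⟨hw', fun t _ => rfl⟩)

lemma line_card (i j : Fin 7) (hij : i ≠ j) (a b : Fin 5) :
    (C.filter (fun w => w i = a ∧ w j = b)).card = 5 := by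
  obtain ⟨k, hki, hkj⟩ : ∃ k : Fin 7, k ≠ i ∧ k ≠ j := by
    revert hij; revert i j; decide
  have hcard := triple_card hC i j k hij hki.symm hkj.symm
  have hex : ∀ c : Fin 5, ∃ w, w ∈ C ∧
      ∀ t ∈ ({i, j, k} : Finset (Fin 7)), w t =
        (fun t => if t = i then a else if t = j then b else c) t :=
    fun c => (hC {i, j, k} hcard _).exists
  choose g hgC hg using hex
  have hgi : ∀ c, g c i = a := by
    intro c
    have := hg c i (by simp)
    simpa using this
  have hgj : ∀ c, g c j = b := by
    intro c
    have := hg c j (by simp)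
    simpa [hij.symm, if_neg] using this
  have hgk : ∀ c, g c k = c := by
    intro c
    have := hg c k (by simp)
    simpa [hki, hkj] using this
  have hb : (Finset.univ : Finset (Fin 5)).card
      = (C.filter (fun w => w i = a ∧ w j = b)).card := by
    refine Finset.card_bij (fun c _ => g c) ?_ ?_ ?_
    · intro c _
      simp only [Finset.mem_filter]
      exact ⟨hgC c, hgi c, hgj c⟩
    · intro c _ c' _ h
      have hgg : g c = g c' := h
      rw [← hgk c, ← hgk c', hgg]
    · intro w hw
      simp only [Finset.mem_filter] at hw
      refine ⟨w k, Finset.mem_univ _, ?_⟩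
      refine (hC {i, j, k} hcard _).unique ⟨hgC _, hg _⟩ ⟨hw.1, ?_⟩
      intro t ht
      rcases Finset.mem_insert.1 ht with rfl | ht
      · simp [hw.2.1]
      rcases Finset.mem_insert.1 ht with rfl | ht
      · simp [hij.symm, hw.2.2]
      · rw [Finset.mem_singleton.1 ht]
        simp [hki, hkj]
  simpa using hb.symm

lemma col_card (i : Fin 7) (a : Fin 5) :
    (C.filter (fun w => w i = a)).card = 25 := by
  obtain ⟨j, hj⟩ : ∃ j : Fin 7, j ≠ i := ⟨⟨(i.1 + 1) % 7, by omega⟩, by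
    intro h; have := congrArg Fin.val h; simp at this; omega⟩
  have : C.filter (fun w => w i = a)
      = (Finset.univ : Finset (Fin 5)).biUnion
          (fun b => C.filter (fun w => w i = a ∧ w j = b)) := by
    ext w
    simp only [Finset.mem_filter, Finset.mem_biUnion, Finset.mem_univ, true_and]
    constructor
    · rintro ⟨h1, h2⟩; exact ⟨w j, h1, h2, rfl⟩
    · rintro ⟨b, h1, h2, h3⟩; exact ⟨h1, h2⟩
  rw [this, Finset.card_biUnion]
  · rw [Finset.sum_congr rfl (fun b _ => line_card hC i j hj.symm a b)]
    simp
  · intro b _ b' _ hbb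
    refine Finset.disjoint_left.2 ?_
    intro w h1 h2
    simp only [Finset.mem_filter] at h1 h2
    exact hbb (h1.2.2 ▸ h2.2.2)

lemma cardC : C.card = 125 := by
  have : C = (Finset.univ : Finset (Fin 5)).biUnion
      (fun a => C.filter (fun w => w 0 = a)) := by
    ext w
    simp only [Finset.mem_biUnion, Finset.mem_univ, true_and, Finset.mem_filter]
    constructor
    · intro h; exact ⟨w 0, h, rfl⟩
    · rintro ⟨a, h, -⟩; exact h
  rw [this, Finset.card_biUnion]
  · rw [Finset.sum_congr rfl (fun a _ => col_card hC 0 a)]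
    simp
  · intro a _ a' _ haa
    refine Finset.disjoint_left.2 ?_
    intro w h1 h2
    simp only [Finset.mem_filter] at h1 h2
    exact haa (h1.2 ▸ h2.2)

lemma tangent_free {u w : Fin 7 → Fin 5} (hu : u ∈ C) (hw : w ∈ C) (hne : w ≠ u)
    (i : Fin 7) (hagree : w i = u i) : ∃ j, j ≠ i ∧ w j = u j := by
  by_contra hcon
  push_neg at hcon
  set T := C.filter (fun x => x i = u i) with hT
  have hTcard : T.card = 25 := col_card hC i (u i)
  set U := (Finset.univ.erase i).biUnion
      (fun j => (C.filter (fun x => x i = u i ∧ x j = u j)).erase u) with hU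
  have hUcard : U.card = 24 := by
    rw [hU, Finset.card_biUnion]
    · have : ∀ j ∈ Finset.univ.erase i,
          ((C.filter (fun x => x i = u i ∧ x j = u j)).erase u).card = 4 := by
        intro j hj
        have hji : j ≠ i := Finset.ne_of_mem_erase hj
        rw [Finset.card_erase_of_mem]
        · rw [line_card hC i j hji.symm]
        · simp [Finset.mem_filter, hu]
      rw [Finset.sum_congr rfl this, Finset.sum_const]
      have : (Finset.univ.erase i).card = 6 := by
        rw [Finset.card_erase_of_mem (Finset.mem_univ _)]
        simp
      rw [this]
      norm_num
    · intro j hj j' hj' hjj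
      refine Finset.disjoint_left.2 ?_
      intro x h1 h2
      have hx1 := Finset.mem_of_mem_erase h1
      have hx2 := Finset.mem_of_mem_erase h2
      have hxu : x ≠ u := Finset.ne_of_mem_erase h1
      simp only [Finset.mem_filter] at hx1 hx2
      have hji : j ≠ i := Finset.ne_of_mem_erase hj
      have hj'i : j' ≠ i := Finset.ne_of_mem_erase hj'
      exact hxu (agree3 hC hx1.1 hu i j j' hji.symm hj'i.symm hjj
        hx1.2.1 hx1.2.2 hx2.2.2)
  have hsub : U ⊆ T.erase u := by
    intro x hx
    rw [hU] at hx
    obtain ⟨j, hj, hxx⟩ := Finset.mem_biUnion.1 hx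
    have h1 := Finset.mem_of_mem_erase hxx
    simp only [Finset.mem_filter] at h1
    refine Finset.mem_erase.2 ⟨Finset.ne_of_mem_erase hxx, ?_⟩
    rw [hT]
    exact Finset.mem_filter.2 ⟨h1.1, h1.2.1⟩
  have hTe : (T.erase u).card = 24 := by
    rw [Finset.card_erase_of_mem]
    · omega
    · rw [hT]; exact Finset.mem_filter.2 ⟨hu, rfl⟩
  have hUeq : U = T.erase u := Finset.eq_of_subset_of_card_le hsub (by omega)
  have hwU : w ∈ U := by
    rw [hUeq]
    refine Finset.mem_erase.2 ⟨hne, ?_⟩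
    rw [hT]
    exact Finset.mem_filter.2 ⟨hw, hagree⟩
  rw [hU] at hwU
  obtain ⟨j, hj, hwx⟩ := Finset.mem_biUnion.1 hwU
  have h1 := Finset.mem_of_mem_erase hwx
  simp only [Finset.mem_filter] at h1
  exact hcon j (Finset.ne_of_mem_erase hj) h1.2.2

lemma exists_opposite {u : Fin 7 → Fin 5} (hu : u ∈ C) :
    ∃ v ∈ C, ∀ i, v i ≠ u i := by
  set M := C.filter (fun w => ∃ i, w i = u i) with hM
  set P := (Finset.univ.filter (fun p : Fin 7 × Fin 7 => p.1 < p.2)).biUnion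
      (fun p => C.filter (fun w => w p.1 = u p.1 ∧ w p.2 = u p.2)) with hP
  have hMP : M ⊆ P := by
    intro w hw
    simp only [hM, Finset.mem_filter] at hw
    obtain ⟨hwC, i, hi⟩ := hw
    by_cases hwu : w = u
    · subst hwu
      refine Finset.mem_biUnion.2 ⟨(0, 1), by decide, ?_⟩
      simp [Finset.mem_filter, hwC]
    · obtain ⟨j, hji, hj⟩ := tangent_free hC hu hwC hwu i hi
      rcases lt_or_gt_of_ne hji with h | h
      · exact Finset.mem_biUnion.2 ⟨(j, i), by simp [Finset.mem_filter, h],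
          Finset.mem_filter.2 ⟨hwC, hj, hi⟩⟩
      · exact Finset.mem_biUnion.2 ⟨(i, j), by simp [Finset.mem_filter, h],
          Finset.mem_filter.2 ⟨hwC, hi, hj⟩⟩
  have hPcard : P.card ≤ 105 := by
    refine le_trans (Finset.card_biUnion_le) ?_
    have : ∀ p ∈ Finset.univ.filter (fun p : Fin 7 × Fin 7 => p.1 < p.2),
        (C.filter (fun w => w p.1 = u p.1 ∧ w p.2 = u p.2)).card = 5 := by
      intro p hp
      simp only [Finset.mem_filter, Finset.mem_univ, true_and] at hp
      exact line_card hC p.1 p.2 (Fin.ne_of_lt hp) _ _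
    rw [Finset.sum_congr rfl this, Finset.sum_const]
    have : (Finset.univ.filter (fun p : Fin 7 × Fin 7 => p.1 < p.2)).card = 21 := by decide
    rw [this]
    norm_num
  have hCM : ¬ C ⊆ M := by
    intro hsub
    have h1 := Finset.card_le_card hsub
    have h2 := Finset.card_le_card hMP
    have := cardC hC
    omega
  obtain ⟨v, hvC, hvM⟩ := Finset.not_subset.1 hCM
  refine ⟨v, hvC, ?_⟩
  intro i hi
  exact hvM (Finset.mem_filter.2 ⟨hvC, i, hi⟩)

lemma core : False := by
  -- pick u
  obtain ⟨u, hu, -⟩ := (hC {0, 1, 2} (by decide) 0).exists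
  obtain ⟨v, hv, hvu⟩ := exists_opposite hC hu
  set e : Fin 5 → Fin 7 := fun t => ⟨t.1 + 2, by omega⟩ with he
  have he0 : ∀ t, e t ≠ 0 := by intro t h; have := congrArg Fin.val h; simp [he] at this
  have he1 : ∀ t, e t ≠ 1 := by intro t h; have := congrArg Fin.val h; simp [he] at this
  have heinj : Function.Injective e := by
    intro t t' h
    have := congrArg Fin.val h
    simp only [he] at this
    exact Fin.ext (by omega)
  have h01 : (0 : Fin 7) ≠ 1 := by decide
  -- the words w k
  have hex : ∀ k : Fin 5, ∃ w, w ∈ C ∧ w 0 = u 0 ∧ w 1 = u 1 ∧ w (e k) = v (e k) := by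
    intro k
    have hcard := triple_card hC 0 1 (e k) h01 (he0 k).symm (he1 k).symm
    obtain ⟨w, ⟨hwC, hw⟩, -⟩ := hC {0, 1, e k} hcard
      (fun t => if t = 0 then u 0 else if t = 1 then u 1 else v t)
    refine ⟨w, hwC, ?_, ?_, ?_⟩
    · simpa using hw 0 (by simp)
    · simpa [h01.symm] using hw 1 (by simp)
    · simpa [he0 k, he1 k] using hw (e k) (by simp)
  choose w hwC hw0 hw1 hwk using hex
  have hwv : ∀ k, w k ≠ v := by
    intro k h
    exact hvu 0 (by rw [← h, hw0])
  -- second agreement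
  have hex2 : ∀ k : Fin 5, ∃ k' : Fin 5, e k' ≠ e k ∧ w k (e k') = v (e k') := by
    intro k
    obtain ⟨j, hj, hagree⟩ := tangent_free hC hv (hwC k) (hwv k) (e k) (hwk k)
    have hj0 : j ≠ 0 := by
      intro h; subst h; exact hvu 0 (by rw [← hagree, hw0])
    have hj1 : j ≠ 1 := by
      intro h; subst h; exact hvu 1 (by rw [← hagree, hw1])
    have : 2 ≤ j.1 := by
      rcases Nat.lt_or_ge j.1 2 with h | h
      · exfalso
        interval_cases hj2 : j.1
        · exact hj0 (Fin.ext (by omega))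
        · exact hj1 (Fin.ext (by omega))
      · exact h
    refine ⟨⟨j.1 - 2, by omega⟩, ?_, ?_⟩
    · have hej : e ⟨j.1 - 2, by omega⟩ = j := Fin.ext (by simp [he]; omega)
      rw [hej]; exact hj
    · have hej : e ⟨j.1 - 2, by omega⟩ = j := Fin.ext (by simp [he]; omega)
      rw [hej]; exact hagree
  choose σ hσne hσag using hex2
  have hσk : ∀ k, σ k ≠ k := fun k h => hσne k (by rw [h])
  -- w (σ k) = w k
  have hww : ∀ k, w (σ k) = w k := by
    intro k
    have hcard := triple_card hC 0 1 (e (σ k)) h01 (he0 _).symm (he1 _).symm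
    have h := hC {0, 1, e (σ k)} hcard
      (fun t => if t = 0 then u 0 else if t = 1 then u 1 else v t)
    refine h.unique ⟨hwC (σ k), ?_⟩ ⟨hwC k, ?_⟩
    · intro t ht
      rcases Finset.mem_insert.1 ht with rfl | ht
      · simpa using hw0 (σ k)
      rcases Finset.mem_insert.1 ht with rfl | ht
      · simpa [h01.symm] using hw1 (σ k)
      · rw [Finset.mem_singleton.1 ht]
        simpa [he0, he1] using hwk (σ k)
    · intro t ht
      rcases Finset.mem_insert.1 ht with rfl | ht
      · simpa using hw0 k
      rcases Finset.mem_insert.1 ht with rfl | ht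
      · simpa [h01.symm] using hw1 k
      · rw [Finset.mem_singleton.1 ht]
        simpa [he0, he1] using hσag k
  -- σ is an involution
  have hinv : Function.Involutive σ := by
    intro k
    by_contra hne
    -- w k agrees with v at e k, e (σ k), e (σ (σ k)) : three distinct coordinates
    have h1 : w k (e k) = v (e k) := hwk k
    have h2 : w k (e (σ k)) = v (e (σ k)) := hσag k
    have h3 : w k (e (σ (σ k))) = v (e (σ (σ k))) := by
      rw [← hww k]; exact hσag (σ k)
    have hd1 : e k ≠ e (σ k) := fun h => hσne k h.symm
    have hd2 : e k ≠ e (σ (σ k)) := fun h => hne (heinj h.symm)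
    have hd3 : e (σ k) ≠ e (σ (σ k)) := fun h => hσne (σ k) h.symm
    exact hwv k (agree3 hC (hwC k) hv (e k) (e (σ k)) (e (σ (σ k)))
      hd1 hd2 hd3 h1 h2 h3)
  obtain ⟨k, hk⟩ := inv5 σ hinv
  exact hσk k hk

end Core


/-! ### Reductions -/

lemma puncture {n m : ℕ} {C : Finset (Fin (n+1) → Fin 5)} (h : Good (n+1) m C) :
    ∃ C' : Finset (Fin n → Fin 5), Good n m C' := by
  classical
  refine ⟨C.image (fun w => w ∘ Fin.castSucc), ?_⟩
  intro S hS f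
  set S' : Finset (Fin (n+1)) := S.image Fin.castSucc with hS'
  have hS'card : S'.card = m := by
    rw [hS', Finset.card_image_of_injective _ (Fin.castSucc_injective n), hS]
  set f' : Fin (n+1) → Fin 5 :=
    fun j => if hj : (j : ℕ) < n then f ⟨j, hj⟩ else 0 with hf'
  obtain ⟨w, ⟨hwC, hwm⟩, hwu⟩ := h S' hS'card f'
  refine ⟨w ∘ Fin.castSucc, ⟨Finset.mem_image.2 ⟨w, hwC, rfl⟩, ?_⟩, ?_⟩
  · intro i hi
    have : w (Fin.castSucc i) = f' (Fin.castSucc i) :=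
      hwm _ (Finset.mem_image.2 ⟨i, hi, rfl⟩)
    rw [Function.comp_apply, this, hf']
    have : ((Fin.castSucc i : Fin (n+1)) : ℕ) < n := i.2
    simp only [this, dif_pos]
    exact congrArg f (Fin.ext rfl)
  · rintro y ⟨hy, hym⟩
    obtain ⟨w₁, hw₁C, rfl⟩ := Finset.mem_image.1 hy
    have : w₁ = w := by
      apply hwu
      refine ⟨hw₁C, ?_⟩
      intro j hj
      obtain ⟨i, hi, rfl⟩ := Finset.mem_image.1 hj
      have h1 : w₁ (Fin.castSucc i) = f i := hym i hi
      rw [h1, hf']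
      have : ((Fin.castSucc i : Fin (n+1)) : ℕ) < n := i.2
      simp only [this, dif_pos]
      exact congrArg f (Fin.ext rfl)
    rw [this]

lemma shorten {n m : ℕ} {C : Finset (Fin (n+1) → Fin 5)} (h : Good (n+1) (m+1) C) :
    ∃ C' : Finset (Fin n → Fin 5), Good n m C' := by
  classical
  refine ⟨(C.filter (fun w => w (Fin.last n) = 0)).image (fun w => w ∘ Fin.castSucc), ?_⟩
  intro S hS f
  set S' : Finset (Fin (n+1)) := insert (Fin.last n) (S.image Fin.castSucc) with hS'
  have hnotmem : Fin.last n ∉ S.image Fin.castSucc := by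
    intro hmem
    obtain ⟨i, _, hi⟩ := Finset.mem_image.1 hmem
    exact absurd (congrArg Fin.val hi) (by simp [Fin.castSucc]; omega)
  have hS'card : S'.card = m + 1 := by
    rw [hS', Finset.card_insert_of_notMem hnotmem,
      Finset.card_image_of_injective _ (Fin.castSucc_injective n), hS]
  set f' : Fin (n+1) → Fin 5 :=
    fun j => if hj : (j : ℕ) < n then f ⟨j, hj⟩ else 0 with hf'
  obtain ⟨w, ⟨hwC, hwm⟩, hwu⟩ := h S' hS'card f'
  have hwlast : w (Fin.last n) = 0 := by
    have := hwm _ (Finset.mem_insert_self _ _)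
    rw [this, hf']
    simp
  refine ⟨w ∘ Fin.castSucc,
    ⟨Finset.mem_image.2 ⟨w, Finset.mem_filter.2 ⟨hwC, hwlast⟩, rfl⟩, ?_⟩, ?_⟩
  · intro i hi
    have : w (Fin.castSucc i) = f' (Fin.castSucc i) :=
      hwm _ (Finset.mem_insert.2 (Or.inr (Finset.mem_image.2 ⟨i, hi, rfl⟩)))
    rw [Function.comp_apply, this, hf']
    have : ((Fin.castSucc i : Fin (n+1)) : ℕ) < n := i.2
    simp only [this, dif_pos]
    exact congrArg f (Fin.ext rfl)
  · rintro y ⟨hy, hym⟩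
    obtain ⟨w₁, hw₁C, rfl⟩ := Finset.mem_image.1 hy
    have hw₁ := Finset.mem_filter.1 hw₁C
    have : w₁ = w := by
      apply hwu
      refine ⟨hw₁.1, ?_⟩
      intro j hj
      rcases Finset.mem_insert.1 hj with rfl | hj
      · rw [hw₁.2, hf']
        simp
      · obtain ⟨i, hi, rfl⟩ := Finset.mem_image.1 hj
        have h1 : w₁ (Fin.castSucc i) = f i := hym i hi
        rw [h1, hf']
        have : ((Fin.castSucc i : Fin (n+1)) : ℕ) < n := i.2
        simp only [this, dif_pos]
        exact congrArg f (Fin.ext rfl)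
    rw [this]

lemma no_good : ∀ n : ℕ, 7 ≤ n → ∀ C : Finset (Fin n → Fin 5), ¬ Good n (n / 2) C := by
  intro n
  induction n using Nat.strong_induction_on with
  | _ n ih =>
    intro hn C hC
    rcases eq_or_lt_of_le hn with h7 | h8
    · -- n = 7
      subst h7
      exact core hC
    · -- n ≥ 8
      obtain ⟨k, rfl⟩ : ∃ k, n = k + 1 := ⟨n - 1, by omega⟩
      rcases Nat.even_or_odd (k+1) with he | ho
      · -- even : shorten
        have hm : (k+1) / 2 = k / 2 + 1 := by
          obtain ⟨t, ht⟩ := he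
          omega
        rw [hm] at hC
        obtain ⟨C', hC'⟩ := shorten hC
        exact ih k (by omega) (by omega) C' hC'
      · -- odd : puncture
        have hm : (k+1) / 2 = k / 2 := by
          obtain ⟨t, ht⟩ := ho
          omega
        rw [hm] at hC
        obtain ⟨C', hC'⟩ := puncture hC
        exact ih k (by omega) (by omega) C' hC'


/-! ### From AME states to codes -/

lemma ame_to_good {n : ℕ} {ψ : (Fin n → Fin 5) → ℂ}
    (hA : IsAME n 5 ψ) (hS : HasMinimalSupport n 5 ψ) :
    Good n (n / 2) (Finset.univ.filter (fun s => ψ s ≠ 0)) := by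
  classical
  set C := Finset.univ.filter (fun s => ψ s ≠ 0) with hCdef
  have hCcard : C.card = 5 ^ (n / 2) := by
    have hset : {s : Fin n → Fin 5 | ψ s ≠ 0} = ↑C := by
      ext s; simp [hCdef]
    rw [HasMinimalSupport, hset, Set.ncard_coe_finset] at hS
    exact hS
  intro S hScard f
  -- existence for arbitrary boundary values
  have hex : ∀ b : {i : Fin n // i ∈ S} → Fin 5,
      ∃ w ∈ C, ∀ i : {i : Fin n // i ∈ S}, w i.1 = b i := by
    intro b
    have h := (hA.2 S (le_of_eq hScard) b b)
    rw [if_pos rfl] at h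
    have hne : ((5 : ℂ) ^ S.card)⁻¹ ≠ 0 := by
      apply inv_ne_zero
      exact pow_ne_zero _ (by norm_num)
    by_contra hcon
    push_neg at hcon
    have hzero : ∀ a : {i : Fin n // i ∉ S} → Fin 5,
        ψ (combine S a b) * (starRingEnd ℂ) (ψ (combine S a b)) = 0 := by
      intro a
      have : ψ (combine S a b) = 0 := by
        by_contra hpsi
        obtain ⟨i, hi⟩ := hcon (combine S a b)
          (Finset.mem_filter.2 ⟨Finset.mem_univ _, hpsi⟩)
        exact hi (by simp [combine, i.2])
      rw [this]
      simp
    rw [Finset.sum_congr rfl (fun a _ => hzero a), Finset.sum_const_zero] at h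
    exact hne h.symm
  -- the restriction map is injective
  have hinj : ∀ w ∈ C, ∀ w' ∈ C, (∀ i ∈ S, w i = w' i) → w = w' := by
    intro w hw w' hw' hagree
    set g : {x // x ∈ C} → ({i : Fin n // i ∈ S} → Fin 5) :=
      fun x i => x.1 i.1 with hg
    have hgsurj : Function.Surjective g := by
      intro b
      obtain ⟨x, hx, hxb⟩ := hex b
      exact ⟨⟨x, hx⟩, funext (fun i => hxb i)⟩
    have hgbij : Function.Bijective g := by
      rw [Fintype.bijective_iff_surjective_and_card]
      refine ⟨hgsurj, ?_⟩
      rw [Fintype.card_fun, Fintype.card_coe, Fintype.card_coe, hCcard, hScard,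
        Fintype.card_fin]
    have : g ⟨w, hw⟩ = g ⟨w', hw'⟩ := by
      funext i
      exact hagree i.1 i.2
    have := hgbij.1 this
    exact congrArg Subtype.val this
  obtain ⟨w, hw, hwb⟩ := hex (fun i => f i.1)
  refine ⟨w, ⟨hw, fun i hi => hwb ⟨i, hi⟩⟩, ?_⟩
  rintro y ⟨hy, hym⟩
  exact hinj y hy w hw (fun i hi => by rw [hym i hi, hwb ⟨i, hi⟩])

/-- `𝒩(5) = 6`: a minimally supported `AME(6,5)` state exists, and no minimally
supported `AME(n,5)` state exists for `n ≥ 7`. -/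
theorem N_five_eq_six :
    (∃ ψ : (Fin 6 → Fin 5) → ℂ, IsAME 6 5 ψ ∧ HasMinimalSupport 6 5 ψ) ∧
    (∀ n : ℕ, 7 ≤ n →
      ¬ ∃ ψ : (Fin n → Fin 5) → ℂ, IsAME n 5 ψ ∧ HasMinimalSupport n 5 ψ) := by
  constructor
  · exact ⟨ψ₀, part1⟩
  · rintro n hn ⟨ψ, hA, hS⟩
    exact no_good n hn _ (ame_to_good hA hS)

end AMEPaper
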